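/- Let k be a nonnegative integer. Then 64k^3 + 64k^2 + 15k + 1 is a perfect square if and only if k = 0 or k = 1. -/

import Mathlib

set_option maxHeartbeats 1000000

private lemma natAbs_lt_of_sq_lt {a b : ℤ} (h : a^2 < b^2) : a.natAbs < b.natAbs := by
  have h1 : (a.natAbs : ℤ)^2 < (b.natAbs : ℤ)^2 := by
    rwa [Int.natAbs_sq, Int.natAbs_sq]
  have h2 : a.natAbs^2 < b.natAbs^2 := by exact_mod_cast h1
  exact lt_of_pow_lt_pow_left₀ 2 (Nat.zero_le _) h2

private lemma zmod16 : ∀ a b c : ZMod 16, (a+a)^4 ≠ (2*b+1)^4 + c^2 := by decide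

private lemma odd_of_sq_odd {a : ℤ} (h : Odd (a^2)) : Odd a := by
  rcases Int.even_or_odd a with he | ho
  · exfalso
    obtain ⟨r, hr⟩ := he
    exact (Int.not_odd_iff_even.mpr ⟨2*r^2, by rw [hr]; ring⟩) h
  · exact ho

/-- positive version of sq_of_coprime -/
private lemma sq_of_coprime_pos {a b c : ℤ} (h : IsCoprime a b) (heq : a * b = c ^ 2)
    (ha : 0 < a) : ∃ r : ℤ, a = r ^ 2 ∧ 0 ≤ r ∧ r ≠ 0 := by
  obtain ⟨r, hr⟩ := Int.sq_of_isCoprime h heq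
  rcases hr with hr | hr
  · refine ⟨|r|, by rw [sq_abs]; exact hr, abs_nonneg r, ?_⟩
    intro h0
    have : r = 0 := abs_eq_zero.mp h0
    rw [this] at hr
    simp at hr
    omega
  · exfalso; nlinarith [sq_nonneg r]


private lemma aux_qp {q p y : ℤ} (e2 : p^2 - q^2 = 2*y^2) (hy2 : 0 < y^2)
    (hq0 : 0 ≤ q) (hp0 : 0 ≤ p) : q < p := by nlinarith

private lemma aux_pow4_pos {c : ℤ} (h : 0 < c^2) : 0 < c^4 := by nlinarith

private lemma aux_dx {x c d : ℤ} (h : x^2 = 4*c^4 + d^4) (hx0 : 0 ≤ x)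
    (hc4 : 0 < c^4) (hd2 : 0 < d^2) : d^2 < x := by nlinarith

private lemma aux_fx {f F x d : ℤ} (hf4 : f^4 = F) (hFe : x + d^2 = F + F)
    (hxd : d^2 < x) (hx2 : 2 ≤ x) : f^2 < x^2 := by
  nlinarith [sq_nonneg (f^2 - 1), sq_nonneg f, sq_nonneg (x-2)]

private lemma aux_ysq {x y z : ℤ} (h : x ^ 4 = y ^ 4 + z ^ 2) (hz2 : 0 < z^2)
    (hx2 : 0 < x^2) : y^2 < x^2 := by
  by_contra hle
  push_neg at hle
  have h2 := mul_le_mul hle hle (sq_nonneg x) (sq_nonneg y)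
  nlinarith

private lemma quarticAux : ∀ n : ℕ, ∀ x y z : ℤ, x.natAbs = n →
    x ^ 4 = y ^ 4 + z ^ 2 → y ≠ 0 → z ≠ 0 → False := by
  intro n
  induction n using Nat.strong_induction_on with
  | _ n IH =>
  have key : ∀ x y z : ℤ, 0 ≤ x → 0 ≤ y → 0 ≤ z → x.natAbs = n →
      x ^ 4 = y ^ 4 + z ^ 2 → y ≠ 0 → z ≠ 0 → False := by
    intro x y z hx0 hy0 hz0 hxn h hy hz
    have hzpos : 0 < z := lt_of_le_of_ne hz0 (Ne.symm hz)
    have hypos : 0 < y := lt_of_le_of_ne hy0 (Ne.symm hy)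
    have hy4pos : 0 < y^4 := by positivity
    have hz2pos : 0 < z^2 := by positivity
    have hy2pos : 0 < y^2 := by positivity
    have hxpos : 0 < x := by
      rcases hx0.lt_or_eq with h' | h'
      · exact h'
      · exfalso; rw [← h'] at h; norm_num at h; nlinarith
    have hx2pos : 0 < x^2 := by positivity
    have hysq : y^2 < x^2 := aux_ysq h hz2pos hx2pos
    by_cases hg1 : Int.gcd x y = 1
    · -- coprime case
      have hcop : IsCoprime x y := Int.isCoprime_iff_gcd_eq_one.mpr hg1
      rcases Int.even_or_odd x with hxe | hxo
      · rcases Int.even_or_odd y with hye | hyo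
        · -- both even: contradiction with coprimality
          obtain ⟨a, ha⟩ := hxe
          obtain ⟨b, hb⟩ := hye
          obtain ⟨u, v, huv⟩ := hcop
          rw [ha, hb] at huv
          have : (2:ℤ) ∣ 1 := ⟨u*a + v*b, by linear_combination -huv⟩
          norm_num at this
        · -- x even, y odd: impossible mod 16
          obtain ⟨a, ha⟩ := hxe
          obtain ⟨b, hb⟩ := hyo
          rw [ha, hb] at h
          have hc := congrArg (fun t : ℤ => (t : ZMod 16)) h
          push_cast at hc
          exact zmod16 _ _ _ hc
      · rcases Int.even_or_odd y with hye | hyo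
        · -- x odd, y even: the long case
          obtain ⟨y₁, hy₁e⟩ := hye
          have hx2odd : Odd (x^2) := hxo.pow
          have hy2ev : Even (y^2) := ⟨2*y₁^2, by rw [hy₁e]; ring⟩
          have hC1odd : Odd (x^2 - y^2) := hx2odd.sub_even hy2ev
          have hC2odd : Odd (x^2 + y^2) := hx2odd.add_even hy2ev
          obtain ⟨u, v, huv⟩ := (hcop.pow : IsCoprime (x^2) (y^2))
          obtain ⟨c0, hc0e⟩ := id hC1odd
          have hcopC : IsCoprime (x^2 - y^2) (x^2 + y^2) :=
            ⟨1 - c0*(u-v), -(c0*(u+v)), by linear_combination hc0e - 2*c0*huv⟩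
          have hprod : (x^2 - y^2) * (x^2 + y^2) = z^2 := by linear_combination h
          have hC1pos : 0 < x^2 - y^2 := by linarith
          have hC2pos : 0 < x^2 + y^2 := by positivity
          obtain ⟨q, hq, hq0, hqne⟩ := sq_of_coprime_pos hcopC hprod hC1pos
          obtain ⟨p, hp, hp0, hpne⟩ := sq_of_coprime_pos hcopC.symm
            (by rw [mul_comm]; exact hprod) hC2pos
          have hqodd : Odd q := odd_of_sq_odd (hq ▸ hC1odd)
          have hpodd : Odd p := odd_of_sq_odd (hp ▸ hC2odd)
          have hqpos : 0 < q := lt_of_le_of_ne hq0 (Ne.symm hqne)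
          have e2 : p^2 - q^2 = 2*y^2 := by rw [← hp, ← hq]; ring
          have hqp : q < p := aux_qp e2 hy2pos hq0 hp0
          obtain ⟨U, hU⟩ : Even (p + q) := hpodd.add_odd hqodd
          obtain ⟨V, hV⟩ : Even (p - q) := hpodd.sub_odd hqodd
          have hpUV : p = U + V := by linarith
          have hqUV : q = U - V := by linarith
          have e1 : 4*(U*V) = p^2 - q^2 := by rw [hpUV, hqUV]; ring
          have e3 : y^2 = 4*y₁^2 := by rw [hy₁e]; ring
          have hUV : U*V = 2*y₁^2 := by linarith
          have hUpos : 0 < U := by linarith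
          have hVpos : 0 < V := by linarith
          have hcoppq : IsCoprime q p := by
            have h' : IsCoprime (q^2) (p^2) := by rwa [hq, hp] at hcopC
            rwa [IsCoprime.pow_left_iff (by norm_num : 0 < 2),
              IsCoprime.pow_right_iff (by norm_num : 0 < 2)] at h'
          obtain ⟨α, β, hαβ⟩ := hcoppq
          have hcopUV : IsCoprime U V :=
            ⟨α+β, β-α, by linear_combination hαβ - β*hpUV - α*hqUV⟩
          have hy₁ne : y₁ ≠ 0 := by
            intro h0; rw [h0] at hy₁e; simp at hy₁e; exact hy hy₁e
          -- produce c, d with x^2 = 4c^4 + d^4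
          obtain ⟨c, d, hcd, hdodd, hcne, hx2cd⟩ :
              ∃ c d : ℤ, IsCoprime c d ∧ Odd d ∧ c ≠ 0 ∧ x^2 = 4*c^4 + d^4 := by
            rcases Int.even_or_odd U with hUe | hUo
            · obtain ⟨U', hU'⟩ := hUe
              have hVodd : Odd V := by
                have h' := hpodd.sub_even ⟨U', hU'⟩
                rwa [show p - U = V by linarith] at h'
              have hU'V : U' * V = y₁^2 := by
                have h2 : 2*(U'*V) = 2*y₁^2 := by
                  rw [← hUV, hU']; ring
                linarith
              obtain ⟨γ, δ, hγδ⟩ := hcopUV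
              have hcopU'V : IsCoprime U' V := ⟨γ+γ, δ, by linear_combination hγδ - γ*hU'⟩
              have hU'pos : 0 < U' := by linarith
              obtain ⟨c, hc, hcge, hcnz⟩ := sq_of_coprime_pos hcopU'V hU'V hU'pos
              obtain ⟨d, hd, hdge, hdnz⟩ := sq_of_coprime_pos hcopU'V.symm
                (by rw [mul_comm]; exact hU'V) hVpos
              refine ⟨c, d, ?_, odd_of_sq_odd (hd ▸ hVodd), hcnz, ?_⟩
              · have h' : IsCoprime (c^2) (d^2) := by rwa [hc, hd] at hcopU'V
                rwa [IsCoprime.pow_left_iff (by norm_num : 0 < 2),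
                  IsCoprime.pow_right_iff (by norm_num : 0 < 2)] at h'
              · have hpcd : p = 2*c^2 + d^2 := by rw [hpUV, hU', hc, hd]; ring
                have hqcd : q = 2*c^2 - d^2 := by rw [hqUV, hU', hc, hd]; ring
                have h2x : 2*x^2 = p^2 + q^2 := by linarith [hp, hq]
                rw [hpcd, hqcd] at h2x
                have h2x' : 2*x^2 = 2*(4*c^4 + d^4) := by linear_combination h2x
                linarith
            · obtain ⟨V', hV'⟩ : Even V := by
                have h' := hpodd.sub_odd hUo
                rwa [show p - U = V by linarith] at h'
              have hV'U : V' * U = y₁^2 := by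
                have h2 : 2*(V'*U) = 2*y₁^2 := by
                  rw [← hUV, hV']; ring
                linarith
              obtain ⟨γ, δ, hγδ⟩ := hcopUV
              have hcopV'U : IsCoprime V' U := ⟨δ+δ, γ, by linear_combination hγδ - δ*hV'⟩
              have hV'pos : 0 < V' := by linarith
              obtain ⟨c, hc, hcge, hcnz⟩ := sq_of_coprime_pos hcopV'U hV'U hV'pos
              obtain ⟨d, hd, hdge, hdnz⟩ := sq_of_coprime_pos hcopV'U.symm
                (by rw [mul_comm]; exact hV'U) hUpos
              refine ⟨c, d, ?_, odd_of_sq_odd (hd ▸ hUo), hcnz, ?_⟩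
              · have h' : IsCoprime (c^2) (d^2) := by rwa [hc, hd] at hcopV'U
                rwa [IsCoprime.pow_left_iff (by norm_num : 0 < 2),
                  IsCoprime.pow_right_iff (by norm_num : 0 < 2)] at h'
              · have hpcd : p = d^2 + 2*c^2 := by rw [hpUV, hV', hc, hd]; ring
                have hqcd : q = d^2 - 2*c^2 := by rw [hqUV, hV', hc, hd]; ring
                have h2x : 2*x^2 = p^2 + q^2 := by linarith [hp, hq]
                rw [hpcd, hqcd] at h2x
                have h2x' : 2*x^2 = 2*(4*c^4 + d^4) := by linear_combination h2x
                linarith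
          -- now descend using x^2 = 4c^4 + d^4
          clear h hy hz hzpos hypos hy4pos hz2pos hy2pos hysq hcop hg1 huv hc0e
            hcopC hprod hC1pos hC2pos hq hq0 hqne hp hp0 hpne hqodd hpodd hqpos
            e2 hqp hU hV hpUV hqUV e1 e3 hUV hUpos hVpos hαβ hcopUV hy₁ne hy₁e
            hy2ev hC1odd hC2odd hx2odd u v α β c0 U V p q y₁ hy0 hz0 hx2pos y z
          have hdne : d ≠ 0 := by rintro rfl; simp at hdodd
          have hc2ne : c^2 ≠ 0 := pow_ne_zero 2 hcne
          have hc2pos : 0 < c^2 := lt_of_le_of_ne (sq_nonneg c) (Ne.symm hc2ne)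
          have hc4pos : 0 < c^4 := aux_pow4_pos hc2pos
          have hd2pos : 0 < d^2 := lt_of_le_of_ne (sq_nonneg d) (Ne.symm (pow_ne_zero 2 hdne))
          have hcop2d : IsCoprime (2:ℤ) d := by
            obtain ⟨j, hj⟩ := hdodd
            exact ⟨-j, 1, by rw [hj]; ring⟩
          have hcop4d : IsCoprime (4:ℤ) d := by
            have h' := hcop2d.mul_left hcop2d
            rwa [show (2:ℤ)*2 = 4 by norm_num] at h'
          have hcopc4d : IsCoprime (4*c^4) d := hcop4d.mul_left (hcd.pow_left)
          have hcopx2d : IsCoprime (x^2) d := by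
            have h' := hcopc4d.add_mul_right_left (d^3)
            rwa [show 4*c^4 + d^3*d = x^2 by linear_combination - hx2cd] at h'
          have hcopxd : IsCoprime x d := by
            rwa [IsCoprime.pow_left_iff (by norm_num : 0 < 2)] at hcopx2d
          have hxd : d^2 < x := aux_dx hx2cd hx0 hc4pos hd2pos
          obtain ⟨E, hEe⟩ : Even (x - d^2) := hxo.sub_odd (hdodd.pow)
          obtain ⟨F, hFe⟩ : Even (x + d^2) := hxo.add_odd (hdodd.pow)
          have e1' : (x-d^2)*(x+d^2) = 4*(E*F) := by rw [hEe, hFe]; ring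
          have e2' : (x-d^2)*(x+d^2) = 4*(c^2)^2 := by linear_combination hx2cd
          have hEF : E*F = (c^2)^2 := by linarith
          have hEpos : 0 < E := by linarith
          have hFpos : 0 < F := by linarith
          obtain ⟨u2, v2, huv2⟩ := (hcopxd.pow_right : IsCoprime x (d^2))
          have hxEF : x = E + F := by linarith
          have hd2EF : d^2 = F - E := by linarith
          have hcopEF : IsCoprime E F :=
            ⟨u2 - v2, u2 + v2, by linear_combination huv2 - u2*hxEF - v2*hd2EF⟩
          obtain ⟨p₁, hp₁, hp₁0, hp₁ne⟩ := sq_of_coprime_pos hcopEF hEF hEpos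
          obtain ⟨q₁, hq₁, hq₁0, hq₁ne⟩ := sq_of_coprime_pos hcopEF.symm
            (by rw [mul_comm]; exact hEF) hFpos
          have hpqc : (p₁*q₁ - c^2)*(p₁*q₁ + c^2) = 0 := by
            linear_combination (-(q₁^2))*hp₁ + (-E)*hq₁ + hEF
          have hpq : p₁*q₁ = c^2 := by
            rcases mul_eq_zero.mp hpqc with h' | h'
            · linarith
            · exfalso; nlinarith [mul_nonneg hp₁0 hq₁0]
          have hcopp₁q₁ : IsCoprime p₁ q₁ := by
            have h' : IsCoprime (p₁^2) (q₁^2) := by rwa [hp₁, hq₁] at hcopEF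
            rwa [IsCoprime.pow_left_iff (by norm_num : 0 < 2),
              IsCoprime.pow_right_iff (by norm_num : 0 < 2)] at h'
          have hp₁pos : 0 < p₁ := lt_of_le_of_ne hp₁0 (Ne.symm hp₁ne)
          have hq₁pos : 0 < q₁ := lt_of_le_of_ne hq₁0 (Ne.symm hq₁ne)
          obtain ⟨e, he, he0, hene⟩ := sq_of_coprime_pos hcopp₁q₁ hpq hp₁pos
          obtain ⟨f, hf, hf0, hfne⟩ := sq_of_coprime_pos hcopp₁q₁.symm
            (by rw [mul_comm]; exact hpq) hq₁pos
          have hnew : f^4 = e^4 + d^2 := by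
            linear_combination (-(q₁+f^2))*hf + (p₁+e^2)*he + hp₁ - hq₁ - hd2EF
          have hf4 : f^4 = F := by rw [hq₁, hf]; ring
          have hd21 : 1 ≤ d^2 := by
            have h' := Int.add_one_le_iff.mpr hd2pos
            linarith
          have hxge2 : 2 ≤ x := by linarith
          have hfx : f^2 < x^2 := aux_fx hf4 hFe hxd hxge2
          exact IH f.natAbs (by rw [← hxn]; exact natAbs_lt_of_sq_lt hfx) f e d rfl hnew hene hdne
        · -- x odd, y odd
          have hx2odd : Odd (x^2) := hxo.pow
          have hy2odd : Odd (y^2) := hyo.pow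
          obtain ⟨A, hAe⟩ : Even (x^2 + y^2) := hx2odd.add_odd hy2odd
          obtain ⟨B, hBe⟩ : Even (x^2 - y^2) := hx2odd.sub_odd hy2odd
          have hzev : Even z := by
            have hz2 : Even (z^2) := by
              have hx4 : Odd (x^4) := hxo.pow
              have hy4 : Odd (y^4) := hyo.pow
              have hzz : z^2 = x^4 - y^4 := by linarith
              rw [hzz]; exact hx4.sub_odd hy4
            rcases Int.even_or_odd z with h' | h'
            · exact h'
            · exfalso
              obtain ⟨r, hr⟩ := h'
              exact (Int.not_odd_iff_even.mpr hz2) ⟨2*r^2+2*r, by rw [hr]; ring⟩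
          obtain ⟨w, hw⟩ := hzev
          have hA2 : 2*A = x^2 + y^2 := by linarith
          have hB2 : 2*B = x^2 - y^2 := by linarith
          have hw2 : 2*w = z := by linarith
          have hAB4 : (2*A)*(2*B) = (2*w)^2 := by rw [hA2, hB2, hw2]; linear_combination h
          have hAB : A*B = w^2 := by
            have h' : 4*(A*B) = 4*(w^2) := by linear_combination hAB4
            linarith
          have hx2AB : x^2 = A + B := by linarith
          have hy2AB : y^2 = A - B := by linarith
          obtain ⟨u, v, huv⟩ := (hcop.pow : IsCoprime (x^2) (y^2))
          have hcopAB : IsCoprime A B :=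
            ⟨u+v, u-v, by linear_combination huv - u*hx2AB - v*hy2AB⟩
          have hApos : 0 < A := by linarith
          have hBpos : 0 < B := by linarith
          obtain ⟨u₁, hu₁, hu₁0, hu₁ne⟩ := sq_of_coprime_pos hcopAB hAB hApos
          obtain ⟨v₁, hv₁, hv₁0, hv₁ne⟩ := sq_of_coprime_pos hcopAB.symm
            (by rw [mul_comm]; exact hAB) hBpos
          have hnew : u₁^4 = v₁^4 + (x*y)^2 := by
            linear_combination (-(A+u₁^2))*hu₁ + (B+v₁^2)*hv₁ - (y^2)*hx2AB - (A+B)*hy2AB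
          have hxyne : x*y ≠ 0 := mul_ne_zero (ne_of_gt hxpos) hy
          have hu₁x : u₁^2 < x^2 := by linarith [hu₁]
          exact IH u₁.natAbs (by rw [← hxn]; exact natAbs_lt_of_sq_lt hu₁x)
            u₁ v₁ (x*y) rfl hnew hv₁ne hxyne
    · -- gcd ≠ 1
      have hgne : Int.gcd x y ≠ 0 := by
        intro h0
        have h' := Int.gcd_eq_zero_iff.mp h0
        exact (ne_of_gt hxpos) h'.1
      obtain ⟨x₁, hx₁⟩ : ((Int.gcd x y : ℤ)) ∣ x := Int.gcd_dvd_left x y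
      obtain ⟨y₁, hy₁⟩ : ((Int.gcd x y : ℤ)) ∣ y := Int.gcd_dvd_right x y
      set g : ℤ := (Int.gcd x y : ℤ) with hgdef
      have hgZ : g ≠ 0 := by
        simp only [hgdef]
        exact_mod_cast hgne
      have hgge : 2 ≤ g := by
        have h2 : 2 ≤ Int.gcd x y := by omega
        simp only [hgdef]
        exact_mod_cast h2
      clear_value g
      have hzz : z^2 = x^4 - y^4 := by linarith
      have hdvd : (g^2)^2 ∣ z^2 := ⟨x₁^4 - y₁^4, by rw [hzz, hx₁, hy₁]; ring⟩
      have hdz : g^2 ∣ z := (Int.pow_dvd_pow_iff two_ne_zero).mp hdvd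
      obtain ⟨z₁, hz₁⟩ := hdz
      have heq1 : g^4 * x₁^4 = g^4 * (y₁^4 + z₁^2) := by
        rw [hx₁, hy₁, hz₁] at h
        linear_combination h
      have h1 : x₁^4 = y₁^4 + z₁^2 := mul_left_cancel₀ (pow_ne_zero 4 hgZ) heq1
      have hy₁ne : y₁ ≠ 0 := by rintro rfl; rw [mul_zero] at hy₁; exact hy hy₁
      have hz₁ne : z₁ ≠ 0 := by rintro rfl; rw [mul_zero] at hz₁; exact hz hz₁
      have hx₁ne : x₁ ≠ 0 := by rintro rfl; rw [mul_zero] at hx₁; exact (ne_of_gt hxpos) hx₁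
      have hxsq : x^2 = g^2 * x₁^2 := by rw [hx₁]; ring
      have hx₁2 : 1 ≤ x₁^2 := by
        have h0' : (0:ℤ) < x₁^2 :=
          lt_of_le_of_ne (sq_nonneg x₁) (Ne.symm (pow_ne_zero 2 hx₁ne))
        have h1' := Int.add_one_le_iff.mpr h0'
        linarith
      have hg4 : 4 ≤ g^2 := by
        calc (4:ℤ) = 2*2 := by norm_num
        _ ≤ g*g := mul_le_mul hgge hgge (by norm_num) (by linarith)
        _ = g^2 := by ring
      have h5 : 4*x₁^2 ≤ g^2*x₁^2 := mul_le_mul_of_nonneg_right hg4 (sq_nonneg x₁)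
      have hx₁sq : x₁^2 < x^2 := by linarith
      exact IH x₁.natAbs (by rw [← hxn]; exact natAbs_lt_of_sq_lt hx₁sq) x₁ y₁ z₁ rfl h1 hy₁ne hz₁ne
  intro x y z hxn h hy hz
  have h4 : |x| ^ 4 = |y| ^ 4 + |z| ^ 2 := by
    rw [← abs_pow, ← abs_pow, ← abs_pow, abs_of_nonneg (by positivity : (0:ℤ) ≤ x^4),
      abs_of_nonneg (by positivity : (0:ℤ) ≤ y^4), abs_of_nonneg (by positivity : (0:ℤ) ≤ z^2)]
    exact h
  exact key |x| |y| |z| (abs_nonneg x) (abs_nonneg y) (abs_nonneg z)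
    (by rw [Int.natAbs_abs]; exact hxn) h4 (abs_ne_zero.mpr hy) (abs_ne_zero.mpr hz)

private lemma pellGood : ∀ n : ℕ, ∀ X Y : ℤ, Y.natAbs = n → 0 ≤ X → X^2 = 32*Y^2 + 17 →
    ∃ s t : ℤ, s^2 + 1 = 2*t^2 ∧ X = 10*s^2 + 8*s*t + 5 := by
  intro n
  induction n using Nat.strong_induction_on with
  | _ n IH =>
  have key : ∀ X Y : ℤ, 0 ≤ Y → Y.natAbs = n → 0 ≤ X → X^2 = 32*Y^2+17 →
      ∃ s t : ℤ, s^2 + 1 = 2*t^2 ∧ X = 10*s^2 + 8*s*t + 5 := by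
    intro X Y hY0 hYn hX0 hXY
    by_cases hY2 : Y ≤ 2
    · -- base cases Y ∈ {0,1,2}
      interval_cases Y
      · exfalso
        have h1 : X ≤ 4 := by nlinarith
        interval_cases X <;> norm_num at hXY
      · have h1 : X ≤ 7 := by nlinarith
        have h2 : 7 ≤ X := by nlinarith
        have hX7 : X = 7 := le_antisymm h1 h2
        exact ⟨1, -1, by norm_num, by rw [hX7]; ring⟩
      · exfalso
        have h1 : X ≤ 12 := by nlinarith
        interval_cases X <;> norm_num at hXY
    · push_neg at hY2
      have hY3 : 3 ≤ Y := hY2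
      obtain ⟨X₁, hX₁def⟩ : ∃ A : ℤ, A = 17*X - 96*Y := ⟨_, rfl⟩
      obtain ⟨Y₁, hY₁def⟩ : ∃ A : ℤ, A = 17*Y - 3*X := ⟨_, rfl⟩
      have hX₁0 : 0 ≤ X₁ := by nlinarith [hXY, hY3, hX0]
      have hXYeq : X₁^2 = 32*Y₁^2 + 17 := by
        rw [hX₁def, hY₁def]; linear_combination hXY
      have hb1 : 16*Y < 3*X := by nlinarith [hXY, hY3, hX0]
      have hb2 : 3*X < 18*Y := by nlinarith [hXY, hY3, sq_nonneg (Y-3)]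
      have hY₁lt : Y₁^2 < Y^2 := by
        rw [hY₁def]; nlinarith [hb1, hb2]
      obtain ⟨s, t, hst, hX₁eq⟩ := IH Y₁.natAbs (by rw [← hYn]; exact natAbs_lt_of_sq_lt hY₁lt)
        X₁ Y₁ rfl hX₁0 hXYeq
      have hXrec : X = 17*X₁ + 96*Y₁ := by rw [hX₁def, hY₁def]; ring
      have hD8 : 8*((2*s^2+5*s*t+1 - 2*Y₁)*(2*s^2+5*s*t+1 + 2*Y₁)) = 0 := by
        linear_combination hXYeq - (X₁ + (10*s^2+8*s*t+5))*hX₁eq - 68*s^2*hst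
      have hD : (2*s^2+5*s*t+1 - 2*Y₁)*(2*s^2+5*s*t+1 + 2*Y₁) = 0 := by linarith
      rcases mul_eq_zero.mp hD with hD' | hD'
      · exact ⟨3*s+4*t, 2*s+3*t, by linear_combination hst,
          by linear_combination hXrec + 17*hX₁eq - 48*hD' + 128*hst⟩
      · exact ⟨3*s-4*t, 3*t-2*s, by linear_combination hst,
          by linear_combination hXrec + 17*hX₁eq + 48*hD' + 32*hst⟩
  intro X Y hYn hX0 hXY
  exact key X |Y| (abs_nonneg Y) (by rw [Int.natAbs_abs]; exact hYn) hX0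
    (by rw [sq_abs]; exact hXY)

theorem stmt_15 (k : ℕ) :
    IsSquare (64 * k ^ 3 + 64 * k ^ 2 + 15 * k + 1) ↔ k = 0 ∨ k = 1 := by
  constructor
  · rintro ⟨m, hm⟩
    have hcast := congrArg (fun t : ℕ => (t : ℤ)) hm
    push_cast at hcast
    have hZ : ((8*(k:ℤ)+1)) * (8*(k:ℤ)^2+7*(k:ℤ)+1) = (m:ℤ)^2 := by
      linear_combination hcast
    have hcop : IsCoprime ((8*(k:ℤ)+1)) ((8*(k:ℤ)^2+7*(k:ℤ)+1)) :=
      ⟨-(4*(k:ℤ)+3), 4, by ring⟩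
    obtain ⟨a, ha, ha0, hane⟩ := sq_of_coprime_pos hcop hZ (by positivity)
    obtain ⟨b, hb, hb0, hbne⟩ := sq_of_coprime_pos hcop.symm
      (by rw [mul_comm]; exact hZ) (by positivity)
    have hPell : (16*(k:ℤ)+7)^2 = 32*b^2 + 17 := by
      rw [← hb]; ring
    obtain ⟨s, t, hst, hXeq⟩ := pellGood b.natAbs (16*(k:ℤ)+7) b rfl (by positivity) hPell
    have hsne : s ≠ 0 := by
      rintro rfl
      norm_num at hst
      have h0 : (0:ℤ) ≤ t^2 := sq_nonneg t
      rcases eq_or_lt_of_le h0 with h' | h'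
      · rw [← h'] at hst; norm_num at hst
      · have := Int.add_one_le_iff.mpr h'
        linarith
    obtain ⟨s', t', hs'pos, hst2, hXeq2⟩ :
        ∃ s' t' : ℤ, 0 < s' ∧ s'^2+1 = 2*t'^2 ∧ (16*(k:ℤ)+7) = 10*s'^2+8*s'*t'+5 := by
      rcases hsne.lt_or_gt with hneg | hpos
      · exact ⟨-s, -t, by linarith, by linear_combination hst, by linear_combination hXeq⟩
      · exact ⟨s, t, hpos, hst, hXeq⟩
    have ha2 : a^2 = s'*(5*s'+4*t') := by
      have h2 : 2*(a^2) = 2*(s'*(5*s'+4*t')) := by linear_combination -2*ha + hXeq2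
      linarith
    have hs'odd : Odd s' := odd_of_sq_odd ⟨t'^2 - 1, by linarith⟩
    have hcopst : IsCoprime s' t' := ⟨-s', 2*t', by linear_combination -hst2⟩
    obtain ⟨j, hj⟩ := id hs'odd
    have c2 : IsCoprime s' (2:ℤ) := ⟨1, -j, by linarith⟩
    have c4 : IsCoprime s' (4*t') := by
      have h' := (c2.mul_right c2).mul_right hcopst
      rwa [show (2:ℤ)*2*t' = 4*t' by ring] at h'
    have hcopfin : IsCoprime s' (5*s'+4*t') := by
      have h' := c4.add_mul_left_right 5
      rwa [show 4*t'+s'*5 = 5*s'+4*t' by ring] at h'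
    obtain ⟨e, he, he0, hene⟩ := sq_of_coprime_pos hcopfin ha2.symm hs'pos
    have he4 : e^4 + 1 = 2*t'^2 := by
      linear_combination hst2 - (s'+e^2)*he
    have heodd : Odd e := odd_of_sq_odd (he ▸ hs'odd)
    obtain ⟨z, hzed⟩ : ∃ z, e^4 - 1 = 2*z := by
      obtain ⟨r, hr⟩ := (heodd.pow (n := 4)).sub_odd odd_one
      exact ⟨r, by linarith⟩
    have hquart : t'^4 = e^4 + z^2 := by
      have h4 : 4*(t'^4) = 4*(e^4 + z^2) := by
        linear_combination (-(e^4+1+2*t'^2))*he4 + (e^4-1+2*z)*hzed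
      linarith
    have he2 : e^2 = 1 := by
      by_cases hzz : z = 0
      · rw [hzz] at hzed
        have h' : (e^2-1)*(e^2+1) = 0 := by linear_combination hzed
        rcases mul_eq_zero.mp h' with h' | h'
        · linarith
        · nlinarith [sq_nonneg e]
      · exact absurd (quarticAux t'.natAbs t' e z rfl hquart hene hzz) not_false
    have hs1 : s' = 1 := by rw [he, he2]
    have ht2 : t'^2 = 1 := by rw [hs1] at hst2; linarith
    have ht : t' = 1 ∨ t' = -1 := by
      have h' : (t'-1)*(t'+1) = 0 := by linear_combination ht2
      rcases mul_eq_zero.mp h' with h' | h'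
      · left; linarith
      · right; linarith
    rw [hs1] at hXeq2
    rcases ht with h' | h' <;> rw [h'] at hXeq2 <;> norm_num at hXeq2 <;> omega
  · rintro (rfl | rfl)
    · exact ⟨1, by norm_num⟩
    · exact ⟨12, by norm_num⟩
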